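/- Let k >= 3, let G be a (k+1)-critical graph, and let v be any vertex of G. Then G contains at least k!/2 distinct cycles of length congruent to 1 mod k, each of which passes through v. -/

import Mathlib

open SimpleGraph
open scoped Classical

/-- `H` is a cycle subgraph of `G`: its vertices and edges are those of some cycle walk. -/
def IsCycleSubgraph {V : Type*} (G : SimpleGraph V) (H : G.Subgraph) : Prop :=
  ∃ (v : V) (w : G.Walk v v), w.IsCycle ∧
    H.verts = {x | x ∈ w.support} ∧ H.edgeSet = {e | e ∈ w.edges}

/-- The set of cycle subgraphs of `G` whose length (number of edges) is `m` mod `r`. -/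
def modCycles {V : Type*} (G : SimpleGraph V) (r m : ℕ) : Set G.Subgraph :=
  {H | IsCycleSubgraph G H ∧ H.edgeSet.ncard % r = m}

/-- `G` is `k`-critical: `χ(G) = k` and every proper subgraph is `(k-1)`-colorable. -/
def IsCritical {V : Type*} [Fintype V] (G : SimpleGraph V) (k : ℕ) : Prop :=
  G.chromaticNumber = (k : ℕ∞) ∧
    ∀ H : G.Subgraph, H ≠ ⊤ → H.coe.Colorable (k - 1)

open Fin.NatCast Fin.CommRing

section ListLemmas
open List
variable {α : Type*}

lemma exists_split_of_not_nodup : ∀ (l : List α), ¬ l.Nodup →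
    ∃ (l1 : List α) (a : α) (l2 l3 : List α), l = l1 ++ a :: (l2 ++ a :: l3)
  | [], h => absurd nodup_nil h
  | x :: t, h => by
    by_cases hx : x ∈ t
    · obtain ⟨s, t', rfl⟩ := List.append_of_mem hx
      exact ⟨[], x, s, t', by simp⟩
    · have ht : ¬ t.Nodup := fun hn => h (hn.cons hx)
      obtain ⟨l1, a, l2, l3, rfl⟩ := exists_split_of_not_nodup t ht
      exact ⟨x :: l1, a, l2, l3, by simp⟩

lemma getLast?_append_ne_nil (l m : List α) (h : m ≠ []) :
    (l ++ m).getLast? = m.getLast? := by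
  rw [List.getLast?_append]
  cases hm : m.getLast? with
  | none => exact absurd (List.getLast?_eq_none_iff.mp hm) h
  | some a => rfl

lemma chain'_dedup (R : α → α → Prop) : ∀ (l : List α), l.IsChain R →
    ∃ l' : List α, l'.IsChain R ∧ l'.Nodup ∧ l'.head? = l.head? ∧ l'.getLast? = l.getLast?
      ∧ ∀ x ∈ l', x ∈ l := by
  intro l
  generalize hn : l.length = n
  induction n using Nat.strong_induction_on generalizing l with
  | _ n ih =>
  intro hc
  by_cases hnd : l.Nodup
  · exact ⟨l, hc, hnd, rfl, rfl, fun x hx => hx⟩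
  · obtain ⟨l1, a, l2, l3, rfl⟩ := exists_split_of_not_nodup l hnd
    set l' : List α := l1 ++ a :: l3 with hl'
    have hchain : l'.IsChain R := by
      rw [hl', List.isChain_append]
      refine ⟨hc.prefix (List.prefix_append _ _), ?_, ?_⟩
      · have hs : (a :: l3) <:+ (l1 ++ a :: (l2 ++ a :: l3)) := ⟨l1 ++ a :: l2, by simp⟩
        exact hc.suffix hs
      · intro x hx y hy
        have := (List.isChain_append.mp hc).2.2 x hx y (by simpa using hy)
        exact this
    have hlen : l'.length < n := by
      subst hn; simp [hl']
    obtain ⟨l'', h1, h2, h3, h4, h5⟩ := ih l'.length hlen l' rfl hchain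
    refine ⟨l'', h1, h2, ?_, ?_, ?_⟩
    · rw [h3, hl']
      cases l1 <;> simp
    · rw [h4, hl']
      cases l3 with
      | nil =>
        rw [show l1 ++ a :: (l2 ++ [a]) = (l1 ++ a :: l2) ++ [a] by simp,
          show l1 ++ [a] = (l1 ++ []) ++ [a] by simp,
          List.getLast?_concat, List.getLast?_concat]
      | cons b t =>
        rw [show l1 ++ a :: (l2 ++ a :: (b :: t)) = (l1 ++ a :: l2 ++ [a]) ++ (b :: t) by simp,
          show l1 ++ a :: (b :: t) = (l1 ++ [a]) ++ (b :: t) by simp,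
          getLast?_append_ne_nil _ _ (by simp), getLast?_append_ne_nil _ _ (by simp)]
    · intro x hx
      have := h5 x hx
      rw [hl'] at this
      simp at this ⊢
      tauto

lemma reflTransGen_to_chain' (R : α → α → Prop) (a x : α)
    (h : Relation.ReflTransGen R a x) :
    ∃ l : List α, l.IsChain R ∧ l.head? = some a ∧ l.getLast? = some x := by
  induction h with
  | refl => exact ⟨[a], by simp, by simp, by simp⟩
  | tail hab hbc ih =>
    obtain ⟨l, hc, hh, hl⟩ := ih
    rename_i b c
    refine ⟨l ++ [c], ?_, ?_, by simp⟩
    · rw [List.isChain_append]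
      refine ⟨hc, by simp, ?_⟩
      intro y hy z hz
      simp only [head?_cons, Option.mem_some_iff] at hz
      subst hz
      rw [hl] at hy
      simp only [Option.mem_some_iff] at hy
      subst hy
      exact hbc
    · cases l with
      | nil => simp at hh
      | cons q t => simpa using hh

lemma chain'_all {R : α → α → Prop} {P : α → Prop} (hR : ∀ x y, R x y → P y) :
    ∀ {l : List α}, l.IsChain R → (∀ a ∈ l.head?, P a) → ∀ x ∈ l, P x := by
  intro l
  induction l with
  | nil => simp
  | cons a t ih =>
    intro hc hh x hx
    rcases List.mem_cons.mp hx with rfl | hx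
    · exact hh x (by simp)
    · cases t with
      | nil => simp at hx
      | cons b t2 =>
        have hc2 := (List.isChain_cons_cons.mp hc).2
        have hRb := (List.isChain_cons_cons.mp hc).1
        exact ih hc2 (by intro z hz; simp at hz; subst hz; exact hR _ _ hRb) x hx

end ListLemmas

section FinLemmas
variable {k : ℕ} [NeZero k]


lemma fin_one_val (hk : 2 ≤ k) : (1 : Fin k).val = 1 := by
  have := Fin.val_cast_of_lt (show 1 < k by omega) (a := 1)
  simpa using this

lemma fin_add_one_eq_zero (hk : 2 ≤ k) (p : Fin k) (h : p + 1 = 0) : p = ((k-1:ℕ) : Fin k) := by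
  have hv : (p + 1).val = (p.val + 1) % k := by
    rw [Fin.val_add, fin_one_val hk]
  rw [h] at hv
  have h0 : (0 : Fin k).val = 0 := rfl
  rw [h0] at hv
  have hlt : p.val < k := p.isLt
  have hd : k ∣ p.val + 1 := Nat.dvd_of_mod_eq_zero hv.symm
  have : p.val + 1 = k := by
    rcases hd with ⟨q, hq⟩
    rcases Nat.lt_or_ge q 2 with h2 | h2
    · interval_cases q <;> omega
    · nlinarith
  apply Fin.ext
  rw [Fin.val_natCast, Nat.mod_eq_of_lt (by omega)]
  omega

lemma fin_km1_val (hk : 2 ≤ k) : (((k-1:ℕ)) : Fin k).val = k-1 := by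
  rw [Fin.val_natCast]; exact Nat.mod_eq_of_lt (by omega)

lemma fin_km1_ne_zero (hk : 2 ≤ k) : (((k-1:ℕ)) : Fin k) ≠ 0 := by
  intro h
  have := congrArg Fin.val h
  rw [fin_km1_val hk] at this
  simp at this
  omega

end FinLemmas

section ChainEdges
variable {V : Type*} {G : SimpleGraph V}

/-- Build a walk from `x` to `y` through intermediate list `l`, given chain adjacency. -/
def mkWalk (G : SimpleGraph V) : (l : List V) → (x y : V) → List.IsChain G.Adj (x :: (l ++ [y])) → G.Walk x y
  | [], x, y, h => SimpleGraph.Walk.cons (by simpa only [List.nil_append, List.isChain_cons_cons, List.isChain_singleton, and_true] using h) SimpleGraph.Walk.nil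
  | z :: t, x, y, h => SimpleGraph.Walk.cons (by simp only [List.cons_append, List.isChain_cons_cons] at h; exact h.1)
      (mkWalk G t z y (by simp only [List.cons_append, List.isChain_cons_cons] at h; exact h.2))

@[simp] lemma mkWalk_support (l : List V) (x y : V) (h) :
    (mkWalk G l x y h).support = x :: (l ++ [y]) := by
  induction l generalizing x with
  | nil => simp [mkWalk]
  | cons z t ih => simp [mkWalk, ih]

/-- List of "edges" of a list of vertices. -/
def chainEdges : List V → List (Sym2 V)
  | [] => []
  | [_] => []
  | x :: y :: t => s(x, y) :: chainEdges (y :: t)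

@[simp] lemma chainEdges_nil : chainEdges ([] : List V) = [] := rfl
@[simp] lemma chainEdges_single (x : V) : chainEdges [x] = [] := rfl
@[simp] lemma chainEdges_cons_cons (x y : V) (t : List V) :
    chainEdges (x :: y :: t) = s(x, y) :: chainEdges (y :: t) := rfl

lemma mkWalk_edges (l : List V) (x y : V) (h) :
    (mkWalk G l x y h).edges = chainEdges (x :: (l ++ [y])) := by
  induction l generalizing x with
  | nil => simp [mkWalk]
  | cons z t ih => simp [mkWalk, ih]
    
lemma mkWalk_length (l : List V) (x y : V) (h) :
    (mkWalk G l x y h).length = l.length + 1 := by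
  induction l generalizing x with
  | nil => simp [mkWalk]
  | cons z t ih => simp [mkWalk, ih]

lemma mem_chainEdges_iff {e : Sym2 V} : ∀ {l : List V},
    e ∈ chainEdges l ↔ ∃ i, ∃ h : i + 1 < l.length,
      e = s(l.get ⟨i, by omega⟩, l.get ⟨i+1, h⟩) := by
  intro l
  induction l with
  | nil => simp
  | cons x t ih =>
    cases t with
    | nil => simp
    | cons y t2 =>
      simp only [chainEdges_cons_cons, List.mem_cons, ih]
      constructor
      · rintro (rfl | ⟨i, h, rfl⟩)
        · exact ⟨0, by simp, rfl⟩
        · exact ⟨i + 1, by simpa using Nat.succ_lt_succ h, rfl⟩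
      · rintro ⟨i, h, rfl⟩
        cases i with
        | zero => left; rfl
        | succ j =>
          right
          exact ⟨j, by simpa using Nat.lt_of_succ_lt_succ h, rfl⟩

lemma chainEdges_concat : ∀ (l : List V) (hl : l ≠ []) (y : V),
    chainEdges (l ++ [y]) = chainEdges l ++ [s(l.getLast hl, y)]
  | [], hl, y => absurd rfl hl
  | [x], _, y => by simp
  | x :: b :: t, _, y => by
    have := chainEdges_concat (b :: t) (by simp) y
    simp only [List.cons_append, chainEdges_cons_cons, this]
    rw [show b :: t ++ [y] = b :: (t ++ [y]) from rfl] at this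
    rw [this, List.getLast_cons (l := b :: t) (by simp)]

end ChainEdges

section Core
variable {V : Type*} {k : ℕ} [NeZero k]

/-- Position of a vertex's color in the ordering `σ`. -/
def cpos (c : V → Fin k) (σ : Equiv.Perm (Fin k)) (x : V) : Fin k := σ.symm (c x)

/-- One step of a "`σ`-consecutive colors" path avoiding `v`. -/
abbrev CRel (G : SimpleGraph V) (v : V) (c : V → Fin k) (σ : Equiv.Perm (Fin k)) (x y : V) :
    Prop :=
  x ≠ v ∧ y ≠ v ∧ G.Adj x y ∧ cpos c σ y = cpos c σ x + 1

/-- A good list for `σ`: a nodup `σ`-consecutive path avoiding `v`, starting at a neighbor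
of `v` of color `σ 0` and ending at a neighbor of `v` of color `σ (k-1)`. -/
abbrev GoodL (G : SimpleGraph V) (v : V) (c : V → Fin k) (σ : Equiv.Perm (Fin k))
    (l : List V) : Prop :=
  l.IsChain (CRel G v c σ) ∧ l.Nodup ∧ v ∉ l ∧
  ∃ a w : V, l.head? = some a ∧ l.getLast? = some w ∧
   G.Adj v a ∧ G.Adj v w ∧ cpos c σ a = 0 ∧ cpos c σ w = ((k-1 : ℕ) : Fin k)

variable {G : SimpleGraph V} {v : V} {c : V → Fin k}

lemma exists_goodL (hk : 3 ≤ k) (hnc : ¬ G.Colorable k)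
    (hc : ∀ ⦃x y⦄, G.Adj x y → x ≠ v → y ≠ v → c x ≠ c y) (σ : Equiv.Perm (Fin k)) :
    ∃ l : List V, GoodL G v c σ l := by
  set S : Set V :=
    {x | ∃ a, G.Adj v a ∧ cpos c σ a = 0 ∧ Relation.ReflTransGen (CRel G v c σ) a x} with hS
  have hSv : ∀ x ∈ S, x ≠ v := by
    rintro x ⟨a, hadj, hpos, hrt⟩
    induction hrt with
    | refl => exact hadj.ne'
    | tail _ hrel _ => exact hrel.2.1
  by_cases hw : ∃ w ∈ S, G.Adj v w ∧ cpos c σ w = ((k-1:ℕ) : Fin k)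
  · obtain ⟨w, ⟨a, hadj, hpos, hrt⟩, hwadj, hwpos⟩ := hw
    obtain ⟨l0, hch0, hh0, hl0⟩ := reflTransGen_to_chain' _ a w hrt
    obtain ⟨l, hch, hnd, hh, hl, hsub⟩ := chain'_dedup _ l0 hch0
    rw [hh0] at hh; rw [hl0] at hl
    refine ⟨l, hch, hnd, ?_, a, w, hh, hl, hadj, hwadj, hpos, hwpos⟩
    -- v ∉ l
    intro hvl
    have hall : ∀ x ∈ l0, x ≠ v := by
      apply chain'_all (R := CRel G v c σ) (P := fun x => x ≠ v) (fun x y h => h.2.1) hch0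
      intro z hz
      rw [hh0] at hz; simp at hz; subst hz; exact hadj.ne'
    exact hall v (hsub v hvl) rfl
  · exfalso
    -- recolor and contradict non-colorability
    push_neg at hw
    set c' : V → Fin k := fun x =>
      if x = v then σ 0 else if x ∈ S then σ (cpos c σ x + 1) else c x with hc'
    have hc'v : c' v = σ 0 := by simp [hc']
    have hc'S : ∀ {x}, x ≠ v → x ∈ S → c' x = σ (cpos c σ x + 1) := by
      intro x hxv hxS; simp [hc', hxv, hxS]
    have hc'n : ∀ {x}, x ≠ v → x ∉ S → c' x = c x := by
      intro x hxv hxS; simp [hc', hxv, hxS]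
    have hvkey : ∀ y, G.Adj v y → c' y ≠ σ 0 := by
      intro y hadj heq
      have hyv : y ≠ v := hadj.ne'
      by_cases hyS : y ∈ S
      · rw [hc'S hyv hyS] at heq
        have h1 : cpos c σ y + 1 = 0 := σ.injective heq
        have h2 : cpos c σ y = ((k-1:ℕ) : Fin k) := fin_add_one_eq_zero (by omega) _ h1
        exact (hw y hyS hadj) h2
      · rw [hc'n hyv hyS] at heq
        have : cpos c σ y = 0 := by
          rw [cpos, heq]; simp
        exact hyS ⟨y, hadj, this, Relation.ReflTransGen.refl⟩
    have hkey : ∀ x y, G.Adj x y → x ≠ v → y ≠ v → c' x ≠ c' y := by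
      intro x y hadj hxv hyv heq
      by_cases hxS : x ∈ S <;> by_cases hyS : y ∈ S
      · rw [hc'S hxv hxS, hc'S hyv hyS] at heq
        have := σ.injective heq
        have : cpos c σ x = cpos c σ y := by
          have h2 := add_right_cancel this
          exact h2
        exact hc hadj hxv hyv (by simpa [cpos] using congrArg σ.toFun this)
      · rw [hc'S hxv hxS, hc'n hyv hyS] at heq
        have h1 : cpos c σ y = cpos c σ x + 1 := by
          rw [cpos, ← heq]; simp
        exact hyS <| by
          obtain ⟨a, h2, h3, h4⟩ := hxS
          exact ⟨a, h2, h3, h4.tail ⟨hxv, hyv, hadj, h1⟩⟩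
      · rw [hc'n hxv hxS, hc'S hyv hyS] at heq
        have h1 : cpos c σ x = cpos c σ y + 1 := by
          rw [cpos, heq]; simp
        exact hxS <| by
          obtain ⟨a, h2, h3, h4⟩ := hyS
          exact ⟨a, h2, h3, h4.tail ⟨hyv, hxv, hadj.symm, h1⟩⟩
      · rw [hc'n hxv hxS, hc'n hyv hyS] at heq
        exact hc hadj hxv hyv heq
    apply hnc
    refine ⟨SimpleGraph.Coloring.mk c' ?_⟩
    intro x y hadj heq
    by_cases hxv : x = v
    · subst hxv
      rw [hc'v] at heq
      exact hvkey y hadj heq.symm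
    · by_cases hyv : y = v
      · subst hyv
        rw [hc'v] at heq
        exact hvkey x hadj.symm heq
      · exact hkey x y hadj hxv hyv heq

end Core

section WalkPart
variable {V : Type*} {k : ℕ} [NeZero k] {G : SimpleGraph V} {v : V} {c : V → Fin k}
variable {σ : Equiv.Perm (Fin k)} {l : List V}

lemma GoodL.ne_nil (hg : GoodL G v c σ l) : l ≠ [] := by
  obtain ⟨-, -, -, a, w, hh, -⟩ := hg
  intro h; subst h; simp at hh

lemma GoodL.head_eq (hg : GoodL G v c σ l) {a w : V} (hh : l.head? = some a)
    (hl : l.getLast? = some w) :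
    ∀ (h0 : 0 < l.length) (h1 : 0 < l.length),
      l.get ⟨0, h0⟩ = a ∧ l.get ⟨l.length - 1, by omega⟩ = w := by
  intro h0 h1
  constructor
  · cases l with
    | nil => simp at hh
    | cons x t => simpa using hh
  · have hne : l ≠ [] := hg.ne_nil
    rw [List.getLast?_eq_getLast hne] at hl
    simp only [Option.some_inj] at hl
    rw [← hl]; simp [List.getLast_eq_getElem]

lemma GoodL.pos_get (hg : GoodL G v c σ l) (i : ℕ) (h : i < l.length) :
    cpos c σ (l.get ⟨i, h⟩) = (i : Fin k) := by
  induction i with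
  | zero =>
    obtain ⟨hch, hnd, hv, a, w, hh, hl, _, _, hpos, _⟩ := hg
    have := (GoodL.head_eq ⟨hch, hnd, hv, a, w, hh, hl, by assumption, by assumption,
      hpos, by assumption⟩ hh hl h h).1
    rw [this]
    simpa using hpos
  | succ j ih =>
    have hj : j < l.length := by omega
    have hstep := List.isChain_iff_getElem.mp hg.1 j (by omega)
    have h2 := hstep.2.2.2
    rw [show l[j] = l.get ⟨j, hj⟩ from rfl, ih hj] at h2
    show cpos c σ l[j+1] = _
    rw [h2]
    push_cast
    ring

lemma GoodL.color_get (hg : GoodL G v c σ l) (i : ℕ) (h : i < l.length) :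
    c (l.get ⟨i, h⟩) = σ (i : Fin k) := by
  have := hg.pos_get i h
  rw [cpos] at this
  rw [← this]
  simp

lemma GoodL.mem_ne_v (hg : GoodL G v c σ l) : ∀ x ∈ l, x ≠ v := by
  intro x hx h; subst h; exact hg.2.2.1 hx

lemma GoodL.length_mod (hk : 3 ≤ k) (hg : GoodL G v c σ l) :
    l.length % k = 0 ∧ 2 ≤ l.length ∧ k ≤ l.length := by
  obtain ⟨hch, hnd, hv, a, w, hh, hl, hva, hvw, hpos, hwpos⟩ := hg
  have hg' : GoodL G v c σ l := ⟨hch, hnd, hv, a, w, hh, hl, hva, hvw, hpos, hwpos⟩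
  have hne : l ≠ [] := hg'.ne_nil
  have hlen : 0 < l.length := List.length_pos_iff.mpr hne
  have hw : l.get ⟨l.length - 1, by omega⟩ = w := (hg'.head_eq hh hl hlen hlen).2
  have h1 := hg'.pos_get (l.length - 1) (by omega)
  rw [hw, hwpos] at h1
  have h2 : (k - 1) % k = (l.length - 1) % k := by
    have := congrArg Fin.val h1
    rw [Fin.val_natCast, Fin.val_natCast] at this
    exact this
  rw [Nat.mod_eq_of_lt (by omega)] at h2
  replace h2 : (l.length - 1) % k = k - 1 := h2.symm
  have hge : k - 1 ≤ l.length - 1 := h2 ▸ Nat.mod_le _ _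

  have hmod0 : l.length % k = 0 := by
    have hl1 : l.length = (l.length - 1) + 1 := by omega
    rw [hl1, Nat.add_mod, h2, Nat.mod_eq_of_lt (show 1 < k by omega)]
    have hkk : k - 1 + 1 = k := by omega
    rw [hkk, Nat.mod_self]
  exact ⟨hmod0, by omega,
    Nat.le_of_dvd (by omega) (Nat.dvd_of_mod_eq_zero hmod0)⟩

lemma GoodL.chain_adj (hg : GoodL G v c σ l) : List.IsChain G.Adj (v :: (l ++ [v])) := by
  obtain ⟨hch, hnd, hv, a, w, hh, hl, hva, hvw, hpos, hwpos⟩ := hg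
  suffices hs : List.IsChain G.Adj (v :: (l ++ [v])) by exact hs
  have hchl : l.IsChain G.Adj := hch.imp (fun x y h => h.2.2.1)
  have h1 : (l ++ [v]).IsChain G.Adj := by
    rw [List.isChain_append]
    refine ⟨hchl, by simp, ?_⟩
    intro x hx y hy
    simp only [List.head?_cons, Option.mem_some_iff] at hy
    subst hy
    rw [hl] at hx
    simp only [Option.mem_some_iff] at hx
    subst hx
    exact hvw.symm
  rw [List.isChain_cons]
  refine ⟨?_, h1⟩
  intro y hy
  cases l with
  | nil => simp at hh
  | cons x t =>
    simp only [List.cons_append, List.head?_cons, Option.mem_some_iff] at hy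
    subst hy
    simp only [List.head?_cons, Option.some_inj] at hh
    rw [← hh] at hva
    exact hva

/-- The closed walk associated to a good list. -/
def GoodL.walk (hg : GoodL G v c σ l) : G.Walk v v := mkWalk G l v v hg.chain_adj

lemma goodL_not_mem_edges (hg : GoodL G v c σ l) {a w : V} (hh : l.head? = some a)
    (hl : l.getLast? = some w) (hk : 3 ≤ k) :
    s(v, a) ∉ chainEdges (l ++ [v]) := by
  intro hmem
  rw [mem_chainEdges_iff] at hmem
  obtain ⟨i, hi, heq⟩ := hmem
  have hlen : 0 < l.length := List.length_pos_iff.mpr hg.ne_nil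
  simp only [List.length_append, List.length_singleton] at hi
  have hget : ∀ (j : ℕ) (hj : j < l.length) (hj2 : j < (l ++ [v]).length),
      (l ++ [v]).get ⟨j, hj2⟩ = l.get ⟨j, hj⟩ := by
    intro j hj hj2
    simp [List.getElem_append_left hj]
  rw [Sym2.eq_iff] at heq
  rcases heq with ⟨hv1, hv2⟩ | ⟨hv1, hv2⟩
  · -- v = (l++[v]).get i with i < l.length
    have hi' : i < l.length := by omega
    rw [hget i hi' (by simp; omega)] at hv1
    exact hg.mem_ne_v _ (List.get_mem l _) hv1.symm
  · -- second case: v = get (i+1), a = get i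
    by_cases hi2 : i + 1 < l.length
    · rw [hget (i+1) hi2 (by simp; omega)] at hv1
      exact hg.mem_ne_v _ (List.get_mem l _) hv1.symm
    · have hi3 : i + 1 = l.length := by omega
      have hi' : i < l.length := by omega
      rw [hget i hi' (by simp; omega)] at hv2
      have hwg : l.get ⟨i, hi'⟩ = w := by
        have h2 := (hg.head_eq hh hl hlen hlen).2
        have hieq : i = l.length - 1 := by omega
        subst hieq
        exact h2
      rw [hwg] at hv2
      -- now a = w, but cpos a = 0 and cpos w = k-1
      obtain ⟨hch, hnd, hv, a', w', hh', hl', hva, hvw, hpos', hwpos'⟩ := hg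
      rw [hh] at hh'; rw [hl] at hl'
      simp only [Option.some_inj] at hh' hl'
      subst hh'; subst hl'
      rw [← hv2] at hwpos'
      rw [hpos'] at hwpos'
      exact fin_km1_ne_zero (by omega) hwpos'.symm

/-- The subgraph of a walk. -/
def wSub {V : Type*} {G : SimpleGraph V} {u u' : V} (W : G.Walk u u') : G.Subgraph where
  verts := {x | x ∈ W.support}
  Adj x y := s(x,y) ∈ W.edges
  adj_sub := fun h => W.adj_of_mem_edges h
  edge_vert := fun h => W.fst_mem_support_of_mem_edges h
  symm := ⟨fun x y h => by
    show s(y, x) ∈ W.edges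
    rw [Sym2.eq_swap]
    exact h⟩

lemma wSub_edgeSet {V : Type*} {G : SimpleGraph V} {u u' : V} (W : G.Walk u u') :
    (wSub W).edgeSet = {e | e ∈ W.edges} := by
  ext e
  refine Sym2.ind (fun x y => ?_) e
  rw [SimpleGraph.Subgraph.mem_edgeSet]
  rfl

lemma GoodL.head_mem_last_mem (hg : GoodL G v c σ l) {a w : V} (hh : l.head? = some a)
    (hl : l.getLast? = some w) : a ∈ l ∧ w ∈ l :=
  ⟨List.mem_of_mem_head? hh, List.mem_of_mem_getLast? hl⟩

lemma GoodL.walk_isCycle (hk : 3 ≤ k) (hg : GoodL G v c σ l) : hg.walk.IsCycle := by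
  obtain ⟨a, t, rfl⟩ := List.exists_cons_of_ne_nil hg.ne_nil
  obtain ⟨hch, hnd, hv, a0, w, hh, hl, hva, hvw, hpos, hwpos⟩ := hg
  have hg' : GoodL G v c σ (a :: t) := ⟨hch, hnd, hv, a0, w, hh, hl, hva, hvw, hpos, hwpos⟩
  · show (mkWalk G (a :: t) v v _).IsCycle
    simp only [mkWalk]
    rw [SimpleGraph.Walk.cons_isCycle_iff]
    constructor
    · rw [SimpleGraph.Walk.isPath_def, mkWalk_support]
      have hnda : a ∉ t := (List.nodup_cons.mp hnd).1
      have hndt : t.Nodup := (List.nodup_cons.mp hnd).2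
      have hvat : v ∉ a :: t := hv
      simp only [List.mem_cons, not_or] at hvat
      rw [List.nodup_cons, List.nodup_append]
      refine ⟨?_, hndt, by simp, ?_⟩
      · simp only [List.mem_append, List.mem_singleton]
        push_neg
        exact ⟨hnda, fun h => hvat.1 h.symm⟩
      · intro x hx
        simp only [List.mem_singleton]
        intro h hh hxh; subst hh; subst hxh
        exact hvat.2 hx
    · rw [mkWalk_edges]
      have := goodL_not_mem_edges hg' (a := a) rfl hl hk
      simpa using this

/-- The cycle subgraph associated to a good list. -/
def GoodL.sub (hg : GoodL G v c σ l) : G.Subgraph := wSub hg.walk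

lemma GoodL.sub_isCycleSubgraph (hk : 3 ≤ k) (hg : GoodL G v c σ l) :
    IsCycleSubgraph G hg.sub :=
  ⟨v, hg.walk, hg.walk_isCycle hk, rfl, wSub_edgeSet _⟩

lemma GoodL.sub_v_mem (hg : GoodL G v c σ l) : v ∈ hg.sub.verts := by
  show v ∈ hg.walk.support
  exact SimpleGraph.Walk.start_mem_support _

lemma GoodL.sub_ncard (hk : 3 ≤ k) (hg : GoodL G v c σ l) :
    hg.sub.edgeSet.ncard % k = 1 := by
  have h1 : hg.sub.edgeSet = (hg.walk.edges.toFinset : Set (Sym2 V)) := by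
    rw [GoodL.sub, wSub_edgeSet]
    ext e; simp
  rw [h1, Set.ncard_coe_finset,
    List.toFinset_card_of_nodup (hg.walk_isCycle hk).isTrail.edges_nodup,
    SimpleGraph.Walk.length_edges, GoodL.walk, mkWalk_length,
    Nat.add_mod, (hg.length_mod hk).1]
  simp [Nat.mod_eq_of_lt (show 1 < k by omega)]

lemma GoodL.sub_edges_mem (hg : GoodL G v c σ l) {e : Sym2 V} :
    e ∈ hg.sub.edgeSet ↔ e ∈ chainEdges (v :: (l ++ [v])) := by
  rw [GoodL.sub, wSub_edgeSet]
  show e ∈ hg.walk.edges ↔ _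
  rw [GoodL.walk, mkWalk_edges]

end WalkPart

section Comb
variable {k : ℕ} [NeZero k]

/-- Unordered successor-pair compatibility between two color orderings. -/
def SuccHyp (k : ℕ) [NeZero k] (σ τ : Equiv.Perm (Fin k)) : Prop :=
  ∀ j : ℕ, j + 1 ≤ k - 1 → ∃ i : Fin k,
    (τ (j : Fin k) = σ i ∧ τ ((j+1 : ℕ) : Fin k) = σ (i+1)) ∨
    (τ (j : Fin k) = σ (i+1) ∧ τ ((j+1 : ℕ) : Fin k) = σ i)

lemma comb (hk : 3 ≤ k) (σ τ : Equiv.Perm (Fin k)) (H : SuccHyp k σ τ)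
    (h0 : τ 0 = σ 0) (hlast : τ ((k-1:ℕ) : Fin k) = σ ((k-1:ℕ) : Fin k)) : τ = σ := by
  have key : ∀ j : ℕ, j ≤ k - 1 → τ (j : Fin k) = σ (j : Fin k) := by
    intro j
    induction j using Nat.strong_induction_on with
    | _ j ih =>
    intro hj
    match j, hj with
    | 0, _ => simpa using h0
    | (m+1), hj =>
      have hm : τ (m : Fin k) = σ (m : Fin k) := ih m (by omega) (by omega)
      obtain ⟨i, hcase⟩ := H m (by omega)
      rcases hcase with ⟨h1, h2⟩ | ⟨h1, h2⟩
      · have hi : i = (m : Fin k) := σ.injective (h1.symm.trans hm)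
        rw [h2, hi]
        push_cast
        ring_nf
      · have hi1 : i + 1 = (m : Fin k) := σ.injective (h1.symm.trans hm)
        by_cases hm0 : m = 0
        · subst hm0
          have hizero : (0 : ℕ) = ((0 : ℕ) : Fin k).val := by simp
          have hi' : i = ((k-1:ℕ) : Fin k) := by
            apply fin_add_one_eq_zero (by omega)
            simpa using hi1
          rw [hi'] at h2
          rw [← hlast] at h2
          have := τ.injective h2
          have hval := congrArg Fin.val this
          rw [Fin.val_natCast, Fin.val_natCast] at hval
          rw [Nat.mod_eq_of_lt (by omega), Nat.mod_eq_of_lt (by omega)] at hval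
          omega
        · have hm1 : τ ((m-1 : ℕ) : Fin k) = σ ((m-1 : ℕ) : Fin k) := ih (m-1) (by omega) (by omega)
          have hi' : i = ((m-1 : ℕ) : Fin k) := by
            have : ((m-1 : ℕ) : Fin k) + 1 = (m : Fin k) := by
              have : ((m-1 : ℕ) : Fin k) + 1 = (((m-1) + 1 : ℕ) : Fin k) := by push_cast; ring
              rw [this]
              congr 1
              omega
            exact add_right_cancel (hi1.trans this.symm)
          rw [hi', ← hm1] at h2
          have := τ.injective h2
          have hval := congrArg Fin.val this
          rw [Fin.val_natCast, Fin.val_natCast] at hval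
          rw [Nat.mod_eq_of_lt (by omega), Nat.mod_eq_of_lt (by omega)] at hval
          omega
  apply Equiv.ext
  intro x
  have hx : x = ((x.val : ℕ) : Fin k) := by simp [Fin.cast_val_eq_self]
  rw [hx]
  exact key x.val (by have := x.isLt; omega)

/-- The "reversal" permutation. -/
def revP (k : ℕ) [NeZero k] : Equiv.Perm (Fin k) := Equiv.subLeft (((k-1:ℕ) : Fin k))

lemma succHyp_rev (σ τ : Equiv.Perm (Fin k)) (H : SuccHyp k σ τ) :
    SuccHyp k ((revP k).trans σ) τ := by
  intro j hj
  obtain ⟨i, hc⟩ := H j hj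
  refine ⟨((k-1:ℕ) : Fin k) - (i+1), ?_⟩
  have e1 : ((revP k).trans σ) (((k-1:ℕ) : Fin k) - (i+1)) = σ (i + 1) := by
    simp [revP, Equiv.subLeft]
  have e2 : ((revP k).trans σ) ((((k-1:ℕ) : Fin k) - (i+1)) + 1) = σ i := by
    simp only [revP, Equiv.trans_apply, Equiv.subLeft_apply]
    congr 1
    ring
  rw [e1, e2]
  tauto

end Comb

section Inj
variable {V : Type*} {k : ℕ} [NeZero k] {G : SimpleGraph V} {v : V} {c : V → Fin k}

lemma GoodL.mem_closedEdges {σ : Equiv.Perm (Fin k)} {l : List V}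
    (hg : GoodL G v c σ l) {a w : V} (hh : l.head? = some a) (hl : l.getLast? = some w)
    {e : Sym2 V} :
    e ∈ chainEdges (v :: (l ++ [v])) ↔ e = s(v, a) ∨ e ∈ chainEdges l ∨ e = s(w, v) := by
  obtain ⟨a', t, rfl⟩ := List.exists_cons_of_ne_nil hg.ne_nil
  have ha : a = a' := by simpa using hh.symm
  subst ha
  have hconcat := chainEdges_concat (a :: t) (by simp) v
  have hgl : (a :: t).getLast (by simp) = w := by
    rw [List.getLast?_eq_getLast (l := a :: t) (by simp)] at hl
    simpa using hl
  rw [hgl] at hconcat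
  show e ∈ chainEdges (v :: ((a :: t) ++ [v])) ↔ _
  have : chainEdges (v :: ((a :: t) ++ [v])) = s(v, a) :: chainEdges ((a :: t) ++ [v]) := rfl
  rw [this, hconcat]
  simp only [List.mem_cons, List.mem_append, List.mem_singleton]
  tauto

lemma mem_chainEdges_ne_v {σ : Equiv.Perm (Fin k)} {l : List V}
    (hg : GoodL G v c σ l) {x y : V} (h : s(x, y) ∈ chainEdges l) : x ≠ v ∧ y ≠ v := by
  rw [mem_chainEdges_iff] at h
  obtain ⟨i, hi, heq⟩ := h
  rw [Sym2.eq_iff] at heq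
  rcases heq with ⟨h1, h2⟩ | ⟨h1, h2⟩ <;>
    exact ⟨by rw [h1]; exact hg.mem_ne_v _ (List.get_mem l _),
      by rw [h2]; exact hg.mem_ne_v _ (List.get_mem l _)⟩

lemma GoodL.color_head (hk : 3 ≤ k) {σ : Equiv.Perm (Fin k)} {l : List V}
    (hg : GoodL G v c σ l) {a w : V} (hh : l.head? = some a) (hl : l.getLast? = some w) :
    c a = σ 0 ∧ c w = σ ((k-1:ℕ) : Fin k) := by
  have hlen : 0 < l.length := List.length_pos_iff.mpr hg.ne_nil
  have h1 := hg.color_get 0 hlen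
  have h2 := hg.color_get (l.length - 1) (by omega)
  rw [(hg.head_eq hh hl hlen hlen).1] at h1
  rw [(hg.head_eq hh hl hlen hlen).2] at h2
  constructor
  · simpa using h1
  · rw [h2]
    congr 1
    obtain ⟨hm, hlen2, hlen3⟩ := hg.length_mod hk
    obtain ⟨q, hq⟩ := Nat.dvd_of_mod_eq_zero hm
    have hq1 : q ≠ 0 := by rintro rfl; omega
    obtain ⟨p, rfl⟩ := Nat.exists_eq_succ_of_ne_zero hq1
    rw [Nat.mul_succ] at hq
    have hsub : l.length - 1 = k * p + (k - 1) := by omega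
    apply Fin.ext
    rw [Fin.val_natCast, Fin.val_natCast, hsub, Nat.mul_add_mod]

lemma goodL_inj (hk : 3 ≤ k) {σ τ : Equiv.Perm (Fin k)} {lσ lτ : List V}
    (hgσ : GoodL G v c σ lσ) (hgτ : GoodL G v c τ lτ)
    (hE : ∀ e : Sym2 V, e ∈ chainEdges (v :: (lσ ++ [v])) ↔ e ∈ chainEdges (v :: (lτ ++ [v]))) :
    τ = σ ∨ τ = (revP k).trans σ := by
  -- unpack endpoints
  obtain ⟨hchσ, hndσ, hvσ, aσ, wσ, hhσ, hlσ, hvaσ, hvwσ, hposσ, hwposσ⟩ := hgσ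
  have hgσ' : GoodL G v c σ lσ := ⟨hchσ, hndσ, hvσ, aσ, wσ, hhσ, hlσ, hvaσ, hvwσ, hposσ, hwposσ⟩
  obtain ⟨hchτ, hndτ, hvτ, aτ, wτ, hhτ, hlτ, hvaτ, hvwτ, hposτ, hwposτ⟩ := hgτ
  have hgτ' : GoodL G v c τ lτ := ⟨hchτ, hndτ, hvτ, aτ, wτ, hhτ, hlτ, hvaτ, hvwτ, hposτ, hwposτ⟩
  have hmemσ := fun e => hgσ'.mem_closedEdges hhσ hlσ (e := e)
  have hmemτ := fun e => hgτ'.mem_closedEdges hhτ hlτ (e := e)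
  have hcaτ : c aτ = τ 0 := (hgτ'.color_head hk hhτ hlτ).1
  have hcwτ : c wτ = τ ((k-1:ℕ) : Fin k) := (hgτ'.color_head hk hhτ hlτ).2
  have hcaσ : c aσ = σ 0 := (hgσ'.color_head hk hhσ hlσ).1
  have hcwσ : c wσ = σ ((k-1:ℕ) : Fin k) := (hgσ'.color_head hk hhσ hlσ).2
  have haσv : aσ ≠ v := hgσ'.mem_ne_v _ (hgσ'.head_mem_last_mem hhσ hlσ).1
  have hwσv : wσ ≠ v := hgσ'.mem_ne_v _ (hgσ'.head_mem_last_mem hhσ hlσ).2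
  have haτv : aτ ≠ v := hgτ'.mem_ne_v _ (hgτ'.head_mem_last_mem hhτ hlτ).1
  have hwτv : wτ ≠ v := hgτ'.mem_ne_v _ (hgτ'.head_mem_last_mem hhτ hlτ).2
  -- τ 0
  have hstart : τ 0 = σ 0 ∨ τ 0 = σ ((k-1:ℕ) : Fin k) := by
    have h1 : s(v, aτ) ∈ chainEdges (v :: (lτ ++ [v])) := (hmemτ _).mpr (Or.inl rfl)
    have h2 := (hmemσ _).mp ((hE _).mpr h1)
    rcases h2 with h2 | h2 | h2
    · rw [Sym2.eq_iff] at h2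
      rcases h2 with ⟨-, h3⟩ | ⟨h3, h4⟩
      · left; rw [← hcaτ, h3, hcaσ]
      · exact absurd h4 haτv
    · obtain ⟨hne, -⟩ := mem_chainEdges_ne_v hgσ' h2
      exact absurd rfl hne
    · rw [Sym2.eq_iff] at h2
      rcases h2 with ⟨h3, h4⟩ | ⟨-, h3⟩
      · exact absurd h4 haτv
      · right; rw [← hcaτ, h3, hcwσ]
  have hend : τ ((k-1:ℕ) : Fin k) = σ 0 ∨ τ ((k-1:ℕ) : Fin k) = σ ((k-1:ℕ) : Fin k) := by
    have h1 : s(wτ, v) ∈ chainEdges (v :: (lτ ++ [v])) := (hmemτ _).mpr (Or.inr (Or.inr rfl))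
    have h2 := (hmemσ _).mp ((hE _).mpr h1)
    rcases h2 with h2 | h2 | h2
    · rw [Sym2.eq_iff] at h2
      rcases h2 with ⟨h3, -⟩ | ⟨h3, -⟩
      · exact absurd h3 hwτv
      · left; rw [← hcwτ, h3, hcaσ]
    · obtain ⟨-, hne⟩ := mem_chainEdges_ne_v hgσ' h2
      exact absurd rfl hne
    · rw [Sym2.eq_iff] at h2
      rcases h2 with ⟨h3, -⟩ | ⟨h3, -⟩
      · right; rw [← hcwτ, h3, hcwσ]
      · exact absurd h3 hwτv
  -- distinctness of the two reference colors
  have hne01 : σ 0 ≠ σ ((k-1:ℕ) : Fin k) := by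
    intro h
    exact fin_km1_ne_zero (by omega) (σ.injective h).symm
  have hneτ : τ 0 ≠ τ ((k-1:ℕ) : Fin k) := by
    intro h
    exact fin_km1_ne_zero (by omega) (τ.injective h).symm
  -- successor hypothesis
  have hsucc : SuccHyp k σ τ := by
    intro j hj
    have hklτ : k ≤ lτ.length := (hgτ'.length_mod hk).2.2
    have hj1 : j + 1 < lτ.length := by omega
    have hj0 : j < lτ.length := by omega
    have h1 : s(lτ.get ⟨j, hj0⟩, lτ.get ⟨j+1, hj1⟩) ∈ chainEdges lτ := by
      rw [mem_chainEdges_iff]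
      exact ⟨j, hj1, rfl⟩
    have h2 := (hmemσ _).mp ((hE _).mpr ((hmemτ _).mpr (Or.inr (Or.inl h1))))
    have hjne : lτ.get ⟨j, hj0⟩ ≠ v := hgτ'.mem_ne_v _ (List.get_mem _ _)
    have hjne1 : lτ.get ⟨j+1, hj1⟩ ≠ v := hgτ'.mem_ne_v _ (List.get_mem _ _)
    rcases h2 with h2 | h2 | h2
    · rw [Sym2.eq_iff] at h2
      rcases h2 with ⟨h3, -⟩ | ⟨-, h3⟩
      · exact absurd h3 hjne
      · exact absurd h3 hjne1
    · rw [mem_chainEdges_iff] at h2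
      obtain ⟨i, hi, heq⟩ := h2
      have hcj : c (lτ.get ⟨j, hj0⟩) = τ (j : Fin k) := hgτ'.color_get j hj0
      have hcj1 : c (lτ.get ⟨j+1, hj1⟩) = τ ((j+1 : ℕ) : Fin k) := hgτ'.color_get (j+1) hj1
      have hci : c (lσ.get ⟨i, by omega⟩) = σ (i : Fin k) := hgσ'.color_get i (by omega)
      have hci1 : c (lσ.get ⟨i+1, hi⟩) = σ ((i+1 : ℕ) : Fin k) := hgσ'.color_get (i+1) hi
      have hcast : ((i+1 : ℕ) : Fin k) = (i : Fin k) + 1 := by push_cast; ring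
      rw [Sym2.eq_iff] at heq
      refine ⟨(i : Fin k), ?_⟩
      rcases heq with ⟨h3, h4⟩ | ⟨h3, h4⟩
      · left
        constructor
        · rw [← hcj, h3, hci]
        · rw [← hcj1, h4, hci1, hcast]
      · right
        constructor
        · rw [← hcj, h3, hci1, hcast]
        · rw [← hcj1, h4, hci]
    · rw [Sym2.eq_iff] at h2
      rcases h2 with ⟨-, h3⟩ | ⟨h3, -⟩
      · exact absurd h3 hjne1
      · exact absurd h3 hjne
  -- conclude
  rcases hstart with h0 | h0
  · left
    have hl' : τ ((k-1:ℕ) : Fin k) = σ ((k-1:ℕ) : Fin k) := by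
      rcases hend with h | h
      · exact absurd (h0.trans h.symm) hneτ
      · exact h
    exact comb hk σ τ hsucc h0 hl'
  · right
    have hl' : τ ((k-1:ℕ) : Fin k) = σ 0 := by
      rcases hend with h | h
      · exact h
      · exact absurd (h0.trans h.symm) hneτ
    have h0' : τ 0 = ((revP k).trans σ) 0 := by
      simp only [revP, Equiv.trans_apply, Equiv.subLeft_apply, sub_zero]
      exact h0
    have hl'' : τ ((k-1:ℕ) : Fin k) = ((revP k).trans σ) ((k-1:ℕ) : Fin k) := by
      simp only [revP, Equiv.trans_apply, Equiv.subLeft_apply, sub_self]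
      exact hl'
    exact comb hk ((revP k).trans σ) τ (succHyp_rev σ τ hsucc) h0' hl''

end Inj

instance subgraphFinite {V : Type*} [Fintype V] (G : SimpleGraph V) : Finite G.Subgraph := by
  classical
  apply Finite.of_injective (fun H : G.Subgraph => (H.verts, H.Adj))
  intro a b h
  rw [Prod.mk.injEq] at h
  exact SimpleGraph.Subgraph.ext h.1 h.2

/-- A `(k+1)`-critical graph has at least `k!/2` cycles of length `1 mod k`
through any given vertex `v`. -/
theorem stmt6 {V : Type*} [Fintype V] (G : SimpleGraph V) (k : ℕ) (hk : 3 ≤ k)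
    (hG : IsCritical G (k + 1)) (v : V) :
    Nat.factorial k / 2 ≤
      {H : G.Subgraph | IsCycleSubgraph G H ∧ H.edgeSet.ncard % k = 1 ∧
        v ∈ H.verts}.ncard := by
  classical
  haveI : NeZero k := ⟨by omega⟩
  obtain ⟨hchrom, hcrit⟩ := hG
  have hnc : ¬ G.Colorable k := by
    intro h
    have h1 := h.chromaticNumber_le
    rw [hchrom] at h1
    have h2 : (k + 1 : ℕ) ≤ k := by exact_mod_cast h1
    omega
  set D : G.Subgraph := (⊤ : G.Subgraph).deleteVerts {v} with hD
  have hDv : v ∉ D.verts := by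
    simp [hD]
  have hDne : D ≠ ⊤ := by
    intro h
    apply hDv
    rw [h]
    simp
  have hcol := hcrit D hDne
  rw [show k + 1 - 1 = k from rfl] at hcol
  obtain ⟨c₀⟩ := hcol
  have hmemD : ∀ x : V, x ≠ v → x ∈ D.verts := by
    intro x hx
    simp [hD, hx]
  set c : V → Fin k := fun x =>
    if hx : x = v then (0 : Fin k) else c₀ ⟨x, hmemD x hx⟩ with hcdef
  have hc : ∀ ⦃x y⦄, G.Adj x y → x ≠ v → y ≠ v → c x ≠ c y := by
    intro x y hadj hx hy heq
    simp only [hcdef, hx, hy, dif_neg, not_false_iff] at heq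
    have hAdj : D.coe.Adj ⟨x, hmemD x hx⟩ ⟨y, hmemD y hy⟩ := by
      simp [hD, SimpleGraph.Subgraph.deleteVerts_adj, hx, hy, hadj]
    exact c₀.valid hAdj heq
  choose L hL using fun σ : Equiv.Perm (Fin k) => exists_goodL hk hnc hc σ
  set F : Equiv.Perm (Fin k) → G.Subgraph := fun σ => (hL σ).sub with hF
  set S := {H : G.Subgraph | IsCycleSubgraph G H ∧ H.edgeSet.ncard % k = 1 ∧
    v ∈ H.verts} with hS
  have hmem : ∀ σ, F σ ∈ S := fun σ =>
    ⟨(hL σ).sub_isCycleSubgraph hk, (hL σ).sub_ncard hk, (hL σ).sub_v_mem⟩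
  have hfib : ∀ σ τ, F σ = F τ → τ = σ ∨ τ = (revP k).trans σ := by
    intro σ τ h
    apply goodL_inj hk (hL σ) (hL τ)
    intro e
    rw [← (hL σ).sub_edges_mem, ← (hL τ).sub_edges_mem]
    show e ∈ (F σ).edgeSet ↔ e ∈ (F τ).edgeSet
    rw [h]
  set T := Finset.univ.image F with hT
  have h2 : (Finset.univ : Finset (Equiv.Perm (Fin k))).card ≤ 2 * T.card := by
    apply Finset.card_le_mul_card_image
    intro b hb
    obtain ⟨σ0, -, hσ0⟩ := Finset.mem_image.mp hb
    have hsubset : (Finset.univ.filter (fun a => F a = b)) ⊆ {σ0, (revP k).trans σ0} := by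
      intro a ha
      rw [Finset.mem_filter] at ha
      have : F σ0 = F a := by rw [hσ0, ha.2]
      rcases hfib σ0 a this with h | h
      · simp [h]
      · simp [h]
    calc (Finset.univ.filter (fun a => F a = b)).card
        ≤ ({σ0, (revP k).trans σ0} : Finset _).card := Finset.card_le_card hsubset
      _ ≤ 2 := Finset.card_insert_le _ _ |>.trans (by simp)
  have h3 : k.factorial ≤ 2 * T.card := by
    have hcard : (Finset.univ : Finset (Equiv.Perm (Fin k))).card = k.factorial := by
      rw [Finset.card_univ]
      simp [Fintype.card_perm]
    rw [← hcard]
    exact h2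
  have h4 : k.factorial / 2 ≤ T.card := by
    calc k.factorial / 2 ≤ (2 * T.card) / 2 := Nat.div_le_div_right h3
      _ = T.card := by omega
  refine le_trans h4 ?_
  have hsub : (↑T : Set G.Subgraph) ⊆ S := by
    intro x hx
    rw [hT] at hx
    simp only [Finset.coe_image, Finset.coe_univ, Set.image_univ, Set.mem_range] at hx
    obtain ⟨σ, rfl⟩ := hx
    exact hmem σ
  calc T.card = (↑T : Set G.Subgraph).ncard := (Set.ncard_coe_finset T).symm
    _ ≤ S.ncard := Set.ncard_le_ncard hsub (Set.toFinite S)
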